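/- Suppose k = 6. Define x · y = (2/|1+ζ₆|²)·Re(x ⋆ y) = (2/3)·Re(x ⋆ y). Then (Λ, ·) is an even unimodular ℤ-lattice: x · y ∈ ℤ for all x, y ∈ Λ, v · v ∈ 2ℤ for all v ∈ Λ, and Λ equals its dual lattice Λ* = {x ∈ ℂ^n : x · v ∈ ℤ for all v ∈ Λ}. -/

import Mathlib

noncomputable section

open Matrix Complex
open scoped Pointwise

/-- `ζ_k = exp(2πi/k)`, a primitive `k`-th root of unity. -/
def zetaC (k : ℕ) : ℂ := Complex.exp (2 * Real.pi * Complex.I / k)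

/-- `ℤ[ζ_k]`, the subring of `ℂ` generated by `ζ_k`. -/
def Rk (k : ℕ) : Subring ℂ := Subring.closure {zetaC k}

/-- The Hermitian form `x ⋆ y = ∑ conj(x i) * A i j * y j` attached to a Gram matrix `A`. -/
def hermF {n : ℕ} (A : Matrix (Fin n) (Fin n) ℂ) (x y : Fin n → ℂ) : ℂ :=
  ∑ i, ∑ j, (starRingEnd ℂ) (x i) * A i j * y j

/-- The real inner product `x · y = (2/|1+ζ_k|²) Re (x ⋆ y)`. -/
def dotF {n : ℕ} (k : ℕ) (A : Matrix (Fin n) (Fin n) ℂ) (x y : Fin n → ℂ) : ℝ :=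
  2 / Complex.normSq (1 + zetaC k) * (hermF A x y).re

/- -------------------- auxiliary lemmas -------------------- -/

lemma zeta6_eq : zetaC 6 = Complex.exp ((Real.pi/3 : ℝ) * Complex.I) := by
  unfold zetaC; norm_num; ring_nf

lemma zeta6_re : (zetaC 6).re = 1/2 := by
  rw [zeta6_eq, Complex.exp_ofReal_mul_I_re, Real.cos_pi_div_three]

lemma zeta6_im : (zetaC 6).im = Real.sqrt 3 / 2 := by
  rw [zeta6_eq, Complex.exp_ofReal_mul_I_im, Real.sin_pi_div_three]

lemma sqrt3_sq : Real.sqrt 3 ^ 2 = 3 := Real.sq_sqrt (by norm_num)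

lemma zeta6_sq : zetaC 6 ^ 2 = zetaC 6 - 1 := by
  apply Complex.ext <;>
  simp [pow_two, Complex.mul_re, Complex.mul_im, zeta6_re, zeta6_im] <;>
  nlinarith [sqrt3_sq]

lemma mem_Rk6 (a : ℂ) : a ∈ Rk 6 ↔ ∃ p q : ℤ, a = p + q * zetaC 6 := by
  constructor
  · intro h
    induction h using Subring.closure_induction with
    | mem x hx => exact ⟨0, 1, by simp [Set.mem_singleton_iff.mp hx]⟩
    | zero => exact ⟨0, 0, by simp⟩
    | one => exact ⟨1, 0, by simp⟩
    | add x y _ _ hx hy =>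
        obtain ⟨p, q, rfl⟩ := hx; obtain ⟨p', q', rfl⟩ := hy
        exact ⟨p + p', q + q', by push_cast; ring⟩
    | neg x _ hx =>
        obtain ⟨p, q, rfl⟩ := hx
        exact ⟨-p, -q, by push_cast; ring⟩
    | mul x y _ _ hx hy =>
        obtain ⟨p, q, rfl⟩ := hx; obtain ⟨p', q', rfl⟩ := hy
        refine ⟨p * p' - q * q', p * q' + q * p' + q * q', ?_⟩
        push_cast
        linear_combination (q:ℂ) * q' * zeta6_sq
  · rintro ⟨p, q, rfl⟩
    exact add_mem (intCast_mem _ p)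
      (mul_mem (intCast_mem _ q)
        (Subring.subset_closure (Set.mem_singleton _)))

lemma hermF_smul_left {n : ℕ} (A : Matrix (Fin n) (Fin n) ℂ) (c : ℂ) (x y : Fin n → ℂ) :
    hermF A (c • x) y = (starRingEnd ℂ) c * hermF A x y := by
  simp only [hermF, Finset.mul_sum, Pi.smul_apply, smul_eq_mul, _root_.map_mul]
  exact Finset.sum_congr rfl fun i _ => Finset.sum_congr rfl fun j _ => by ring

lemma hermF_smul_right {n : ℕ} (A : Matrix (Fin n) (Fin n) ℂ) (c : ℂ) (x y : Fin n → ℂ) :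
    hermF A x (c • y) = c * hermF A x y := by
  simp only [hermF, Finset.mul_sum, Pi.smul_apply, smul_eq_mul]
  exact Finset.sum_congr rfl fun i _ => Finset.sum_congr rfl fun j _ => by ring

lemma hermF_conj {n : ℕ} (A : Matrix (Fin n) (Fin n) ℂ) (hA : A.IsHermitian)
    (x y : Fin n → ℂ) : (starRingEnd ℂ) (hermF A x y) = hermF A y x := by
  simp only [hermF, map_sum, _root_.map_mul, Complex.conj_conj]
  rw [Finset.sum_comm]
  refine Finset.sum_congr rfl fun j _ => Finset.sum_congr rfl fun i _ => ?_
  rw [show (starRingEnd ℂ) (A i j) = A j i from hA.apply j i]; ring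

lemma normSq_theta : Complex.normSq (1 + zetaC 6) = 3 := by
  simp [Complex.normSq_apply, zeta6_re, zeta6_im]
  nlinarith [sqrt3_sq]

lemma theta_ne : (1 + zetaC 6) ≠ 0 := by
  intro h
  have := normSq_theta
  rw [h] at this; simp at this

lemma L1 (p q : ℤ) :
    ((starRingEnd ℂ) (1 + zetaC 6) * ((p : ℂ) + q * zetaC 6)).re = 3/2 * (p + q) := by
  simp [Complex.mul_re, Complex.add_re, Complex.add_im, Complex.mul_im,
    zeta6_re, zeta6_im]
  linear_combination (q : ℝ)/4 * sqrt3_sq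

lemma L2 (p q : ℤ) :
    ((starRingEnd ℂ) (1 + zetaC 6) * ((p : ℂ) + q * zetaC 6)).im
      = Real.sqrt 3 * ((q : ℝ) - p) / 2 := by
  simp [Complex.mul_re, Complex.add_re, Complex.add_im, Complex.mul_im,
    zeta6_re, zeta6_im]
  ring

lemma L3 (c : ℂ) (m l : ℤ) (h1 : c.re = 3 * m / 2) (h2 : (zetaC 6 * c).re = 3 * l / 2) :
    c = (starRingEnd ℂ) (1 + zetaC 6) * ((l : ℂ) + ((m : ℂ) - l) * zetaC 6) := by
  have hs := sqrt3_sq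
  have hspos : (0:ℝ) < Real.sqrt 3 := Real.sqrt_pos.mpr (by norm_num)
  have him : Real.sqrt 3 * c.im = 3 * m / 2 - 3 * l := by
    rw [Complex.mul_re, zeta6_re, zeta6_im, h1] at h2
    linear_combination (-2 : ℝ) * h2
  apply Complex.ext
  · rw [h1]
    simp [Complex.mul_re, Complex.add_re, Complex.add_im, Complex.mul_im, Complex.sub_re,
      Complex.sub_im, zeta6_re, zeta6_im]
    linear_combination (-((m:ℝ) - l)/4) * hs
  · simp [Complex.mul_re, Complex.add_re, Complex.add_im, Complex.mul_im, Complex.sub_re,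
      Complex.sub_im, zeta6_re, zeta6_im]
    linear_combination (Real.sqrt 3 / 3) * him - (c.im / 3) * hs

/-- Let `Λ = ℤ[ζ₆]^n` be a `(1+ζ₆)`-modular Hermitian lattice with Gram matrix `H`, and let
`x · y = (2/|1+ζ₆|²) Re(x ⋆ y) = (2/3) Re(x ⋆ y)`.  Then `(Λ, ·)` is an even unimodular
`ℤ`-lattice: the form `·` is integer valued on `Λ`, `v · v` is even for `v ∈ Λ`, and `Λ`
equals its dual lattice `Λ*`. -/
theorem modular_lattice_k6_even_unimodular
    (n : ℕ) (hn : 1 ≤ n)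
    (H : Matrix (Fin n) (Fin n) ℂ)
    (hentries : ∀ i j, H i j ∈ Rk 6)
    (hherm : H.IsHermitian)
    (hinv : IsUnit H.det)
    (hmod : (1 + zetaC 6) •
        {x : Fin n → ℂ | ∀ v : Fin n → ℂ, (∀ i, v i ∈ Rk 6) → hermF H x v ∈ Rk 6} =
        {x : Fin n → ℂ | ∀ i, x i ∈ Rk 6}) :
    (∀ x y : Fin n → ℂ, (∀ i, x i ∈ Rk 6) → (∀ i, y i ∈ Rk 6) →
      dotF 6 H x y ∈ Set.range ((↑) : ℤ → ℝ)) ∧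
    (∀ v : Fin n → ℂ, (∀ i, v i ∈ Rk 6) → ∃ m : ℤ, dotF 6 H v v = 2 * (m : ℝ)) ∧
    {x : Fin n → ℂ | ∀ v : Fin n → ℂ, (∀ i, v i ∈ Rk 6) →
        dotF 6 H x v ∈ Set.range ((↑) : ℤ → ℝ)} =
      {x : Fin n → ℂ | ∀ i, x i ∈ Rk 6} := by
  set θ : ℂ := 1 + zetaC 6 with hθ
  -- decomposition of lattice vectors via modularity
  have hdecomp : ∀ x : Fin n → ℂ, (∀ i, x i ∈ Rk 6) →
      ∃ d : Fin n → ℂ, (∀ v : Fin n → ℂ, (∀ i, v i ∈ Rk 6) → hermF H d v ∈ Rk 6) ∧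
        x = θ • d := by
    intro x hx
    have : x ∈ (θ • {x : Fin n → ℂ | ∀ v : Fin n → ℂ, (∀ i, v i ∈ Rk 6) →
        hermF H x v ∈ Rk 6}) := by
      rw [hmod]; exact hx
    obtain ⟨d, hd, hdx⟩ := this
    exact ⟨d, hd, hdx.symm⟩
  -- the key integrality computation
  have key : ∀ x y : Fin n → ℂ, (∀ i, x i ∈ Rk 6) → (∀ i, y i ∈ Rk 6) →
      ∃ p q : ℤ, hermF H x y = (starRingEnd ℂ) θ * ((p : ℂ) + q * zetaC 6) ∧
        dotF 6 H x y = p + q := by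
    intro x y hx hy
    obtain ⟨d, hd, rfl⟩ := hdecomp x hx
    obtain ⟨p, q, hpq⟩ := (mem_Rk6 _).mp (hd y hy)
    refine ⟨p, q, ?_, ?_⟩
    · rw [hermF_smul_left, hpq]
    · rw [dotF, hermF_smul_left, hpq, ← hθ, normSq_theta, L1]
      push_cast; ring
  refine ⟨?_, ?_, ?_⟩
  · intro x y hx hy
    obtain ⟨p, q, _, h2⟩ := key x y hx hy
    exact ⟨p + q, by rw [h2]; push_cast; ring⟩
  · intro v hv
    obtain ⟨p, q, h1, h2⟩ := key v v hv hv
    -- hermF H v v is real, so p = q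
    have hreal : (hermF H v v).im = 0 := by
      have := hermF_conj H hherm v v
      have h := Complex.conj_eq_iff_im.mp this
      exact h
    have hqp : (q : ℝ) = p := by
      rw [h1, L2] at hreal
      have hspos : (0:ℝ) < Real.sqrt 3 := Real.sqrt_pos.mpr (by norm_num)
      have : Real.sqrt 3 * ((q : ℝ) - p) = 0 := by linarith
      rcases mul_eq_zero.mp this with h | h
      · exact absurd h (ne_of_gt hspos)
      · linarith
    exact ⟨p, by rw [h2]; rw [hqp]; ring⟩
  · ext x
    simp only [Set.mem_setOf_eq]
    constructor
    · intro hx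
      -- x is in the dual lattice; show x ∈ Λ using hmod
      have hxmem : x ∈ (θ • {x : Fin n → ℂ | ∀ v : Fin n → ℂ, (∀ i, v i ∈ Rk 6) →
          hermF H x v ∈ Rk 6}) := by
        refine ⟨θ⁻¹ • x, ?_, smul_inv_smul₀ theta_ne x⟩
        intro v hv
        -- integrality of dot products with v and ζ•v
        obtain ⟨m, hm⟩ := hx v hv
        have hzv : ∀ i, (zetaC 6 • v) i ∈ Rk 6 := fun i => by
          exact mul_mem (Subring.subset_closure (Set.mem_singleton _)) (hv i)
        obtain ⟨l, hl⟩ := hx (zetaC 6 • v) hzv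
        rw [dotF, ← hθ, normSq_theta] at hm hl
        rw [hermF_smul_right] at hl
        have h1 : (hermF H x v).re = 3 * m / 2 := by linarith
        have h2 : (zetaC 6 * hermF H x v).re = 3 * l / 2 := by linarith
        have hc := L3 _ m l h1 h2
        rw [hermF_smul_left, hc, map_inv₀, ← mul_assoc,
          inv_mul_cancel₀ (by simpa using theta_ne : (starRingEnd ℂ) θ ≠ 0), one_mul]
        exact add_mem (intCast_mem _ l)
          (mul_mem (by push_cast; exact sub_mem (intCast_mem _ m) (intCast_mem _ l))
            (Subring.subset_closure (Set.mem_singleton _)))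
      rw [hmod] at hxmem
      exact hxmem
    · intro hx v hv
      obtain ⟨p, q, _, h2⟩ := key x v hx hv
      exact ⟨p + q, by rw [h2]; push_cast; ring⟩

end
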